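/- For all h ≥ 1 and k ≥ 1, there exists a deterministic thrifty k-way branching program with exactly (k+1)^h states that solves the function tree evaluation problem FT^h_2(k). -/

import Mathlib

/-! Framework: the tree evaluation problem and deterministic k-way branching programs.

The balanced binary tree of height `h` has nodes numbered heap-style `1, …, 2^h - 1`:
the root is node `1` and the children of node `i` are `2i` and `2i+1`.
Elements of `[k] = {1,…,k}` are represented by `Fin k` (the element `1 ∈ [k]`
corresponds to `(0 : Fin k)`). -/

/-- Node `i` is a leaf of the height-`h` balanced binary tree. -/
def IsLeafNode (h i : ℕ) : Prop := 2 ^ (h - 1) ≤ i ∧ i < 2 ^ h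

/-- Node `i` is an internal node of the height-`h` balanced binary tree. -/
def IsInternalNode (h i : ℕ) : Prop := 1 ≤ i ∧ i < 2 ^ (h - 1)

/-- An input to the height-`h` tree evaluation problem over `[k]`: a binary function on `[k]`
for each internal node and a value in `[k]` for each leaf (values at irrelevant indices
are ignored). -/
structure TEInput (h k : ℕ) where
  f : ℕ → Fin k → Fin k → Fin k
  leaf : ℕ → Fin k

/-- Auxiliary recursion (on fuel) computing node values. -/
def TEInput.valAux {h k : ℕ} (I : TEInput h k) : ℕ → ℕ → Fin k
  | 0, i => I.leaf i
  | m + 1, i =>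
      if 2 ^ (h - 1) ≤ i then I.leaf i
      else I.f i (I.valAux m (2 * i)) (I.valAux m (2 * i + 1))

/-- The value `v_i^I` of node `i`: the leaf value if `i` is a leaf, and
`f_i^I (v_{2i}^I, v_{2i+1}^I)` if `i` is an internal node. -/
def TEInput.val {h k : ℕ} (I : TEInput h k) (i : ℕ) : Fin k := I.valAux h i

/-- The input variables of the tree evaluation problem: one variable `f_i(a,b)` for each
internal node `i` and `a b ∈ [k]`, and one variable `l_i` for each leaf `i`. -/
inductive TEVar (h k : ℕ) where
  | internal (i : ℕ) (hi : IsInternalNode h i) (a b : Fin k) : TEVar h k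
  | leaf (i : ℕ) (hi : IsLeafNode h i) : TEVar h k

/-- The value of a variable under an input. -/
def TEInput.evalVar {h k : ℕ} (I : TEInput h k) : TEVar h k → Fin k
  | .internal i _ a b => I.f i a b
  | .leaf i _ => I.leaf i

/-- The node a variable belongs to. -/
def TEVar.node {h k : ℕ} : TEVar h k → ℕ
  | .internal i _ _ _ => i
  | .leaf i _ => i

/-- `X` is the thrifty `i` variable of input `I`: it is `f_i(v_{2i}^I, v_{2i+1}^I)`
if `i` is an internal node, and `l_i` if `i` is a leaf. -/
def IsThriftyVarOf {h k : ℕ} (I : TEInput h k) (i : ℕ) : TEVar h k → Prop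
  | .internal j _ a b => j = i ∧ a = I.val (2 * j) ∧ b = I.val (2 * j + 1)
  | .leaf j _ => j = i

/-- A deterministic `k`-way branching program with variables indexed by `V` and
output set `R`: a set of states (of cardinality `size`), a start state, each state
labeled either with a variable to query (non-output states, with `k` out-edges
labeled `1,…,k`) or with an output value (output sink states). -/
structure DetBP (V : Type) (k : ℕ) (R : Type) where
  size : ℕ
  start : Fin size
  label : Fin size → V ⊕ R
  next : Fin size → Fin k → Fin size

namespace DetBP

variable {V : Type} {k : ℕ} {R : Type}

/-- One step of computation on input `x`: from a state querying variable `v`, follow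
the out-edge labeled `x v`; output states are sinks. -/
def step (B : DetBP V k R) (x : V → Fin k) (s : Fin B.size) : Fin B.size :=
  match B.label s with
  | .inl v => B.next s (x v)
  | .inr _ => s

/-- The state of the computation path of `x` at time `t`. -/
def run (B : DetBP V k R) (x : V → Fin k) (t : ℕ) : Fin B.size :=
  (B.step x)^[t] B.start

/-- The depth of `B` is at most `D`: on every input, the computation path reaches an
output state within its first `D` states. -/
def DepthLE (B : DetBP V k R) (D : ℕ) : Prop :=
  ∀ x : V → Fin k, ∃ t < D, (B.label (B.run x t)).isRight = true

/-- `B` solves the function tree evaluation problem `FT^h_2(k)`: on every input `I`, the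
computation path ends in the output state labeled with the root value `v_1^I`. -/
def SolvesFT {h : ℕ} (B : DetBP (TEVar h k) k (Fin k)) : Prop :=
  ∀ I : TEInput h k, ∃ t, B.label (B.run I.evalVar t) = Sum.inr (I.val 1)

/-- `B` solves the decision tree evaluation problem `BT^h_2(k)`: on every input `I`, the
computation path ends in the output state labeled with whether `v_1^I = 1`
(the element `1 ∈ [k]` being `(0 : Fin k)`). -/
def SolvesBT {h : ℕ} (B : DetBP (TEVar h k) k Bool) : Prop :=
  ∀ I : TEInput h k, ∃ t, B.label (B.run I.evalVar t) = Sum.inr (decide ((I.val 1 : Fin k).val = 0))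

/-- `B` is thrifty: on every input `I`, every query `f_i(a,b)` made along the computation
path of `I` satisfies `a = v_{2i}^I` and `b = v_{2i+1}^I`. -/
def Thrifty {h : ℕ} (B : DetBP (TEVar h k) k R) : Prop :=
  ∀ (I : TEInput h k) (t i : ℕ) (hi : IsInternalNode h i) (a b : Fin k),
    B.label (B.run I.evalVar t) = Sum.inl (TEVar.internal i hi a b) →
    a = I.val (2 * i) ∧ b = I.val (2 * i + 1)

end DetBP

namespace ThriftyConstruction

/-! ### Value lemmas -/

lemma valAux_leaf {m k : ℕ} (I : TEInput (m+1) k) (n i : ℕ) (hi : 2 ^ m ≤ i) :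
    I.valAux n i = I.leaf i := by
  cases n with
  | zero => rfl
  | succ n => simp [TEInput.valAux, hi]

lemma valAux_stable {m k : ℕ} (I : TEInput (m+1) k) :
    ∀ (a n i : ℕ), 2 ^ m ≤ i * 2 ^ a → I.valAux (a + n) i = I.valAux a i := by
  intro a
  induction a with
  | zero =>
    intro n i hi
    simp only [pow_zero, mul_one] at hi
    rw [Nat.zero_add, valAux_leaf I n i hi]
    rfl
  | succ a ih =>
    intro n i hi
    by_cases h2 : 2 ^ m ≤ i
    · rw [valAux_leaf I _ i h2, valAux_leaf I _ i h2]
    · have e1 : a + 1 + n = (a + n) + 1 := by omega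
      rw [e1]
      simp only [TEInput.valAux, Nat.add_sub_cancel, if_neg h2]
      have hL : 2 ^ m ≤ 2 * i * 2 ^ a := by
        have : i * 2 ^ (a + 1) = 2 * i * 2 ^ a := by ring
        omega
      have hR : 2 ^ m ≤ (2 * i + 1) * 2 ^ a := by
        have : 2 * i * 2 ^ a ≤ (2 * i + 1) * 2 ^ a := by
          apply Nat.mul_le_mul_right; omega
        omega
      rw [ih n (2 * i) hL, ih n (2 * i + 1) hR]

lemma val_leaf {m k : ℕ} (I : TEInput (m+1) k) (i : ℕ) (hi : 2 ^ m ≤ i) :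
    I.val i = I.leaf i := valAux_leaf I (m+1) i hi

lemma val_internal {m k : ℕ} (I : TEInput (m+1) k) (i : ℕ) (h1 : 1 ≤ i) (h2 : i < 2 ^ m) :
    I.val i = I.f i (I.val (2 * i)) (I.val (2 * i + 1)) := by
  have hL : I.valAux (m + 1) (2 * i) = I.valAux m (2 * i) := by
    apply valAux_stable I m 1
    calc 2 ^ m = 1 * 2 ^ m := by ring
    _ ≤ 2 * i * 2 ^ m := by apply Nat.mul_le_mul_right; omega
  have hR : I.valAux (m + 1) (2 * i + 1) = I.valAux m (2 * i + 1) := by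
    apply valAux_stable I m 1
    calc 2 ^ m = 1 * 2 ^ m := by ring
    _ ≤ (2 * i + 1) * 2 ^ m := by apply Nat.mul_le_mul_right; omega
  show I.valAux (m+1) i = _
  simp only [TEInput.valAux, Nat.add_sub_cancel, if_neg (by omega : ¬ 2 ^ m ≤ i)]
  rw [TEInput.val, TEInput.val, hL, hR]

/-! ### The state space -/

abbrev St (m k : ℕ) := Fin (m + 1) → Option (Fin k)

variable {m k : ℕ}

def lastIdx (m : ℕ) : Fin (m + 1) := ⟨m, Nat.lt_succ_self m⟩

/-- Digit of `w` at position `j` (as a natural number index). -/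
def dig (w : St m k) (j : ℕ) : Option (Fin k) :=
  if hj : j < m + 1 then w ⟨j, hj⟩ else none

lemma dig_fin (w : St m k) (j : Fin (m+1)) : dig w j.val = w j := by
  simp [dig, j.isLt]

lemma dig_last (w : St m k) : dig w m = w (lastIdx m) := dig_fin w (lastIdx m)

/-- The node determined by the first `d` digits (none = left turn, some = right turn). -/
def nodeOf (w : St m k) : ℕ → ℕ
  | 0 => 1
  | d + 1 => 2 * nodeOf w d + (if (dig w d).isSome then 1 else 0)

lemma nodeOf_lb (w : St m k) (d : ℕ) : 2 ^ d ≤ nodeOf w d := by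
  induction d with
  | zero => simp [nodeOf]
  | succ d ih =>
    simp only [nodeOf, pow_succ]
    by_cases h : (dig w d).isSome <;> simp [h] <;> omega

lemma nodeOf_ub (w : St m k) (d : ℕ) : nodeOf w d < 2 ^ (d + 1) := by
  induction d with
  | zero => simp [nodeOf]
  | succ d ih =>
    simp only [nodeOf, pow_succ]
    by_cases h : (dig w d).isSome <;> simp [h] <;> omega

lemma nodeOf_congr {w w' : St m k} (d : ℕ) (hw : ∀ j, j < d → dig w j = dig w' j) :
    nodeOf w d = nodeOf w' d := by
  induction d with
  | zero => rfl
  | succ d ih =>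
    simp only [nodeOf]
    rw [ih (fun j hj => hw j (by omega)), hw d (by omega)]

/-- Position of the last non-`none` digit among positions `< n`. -/
def lastPos (w : St m k) : ℕ → Option ℕ
  | 0 => none
  | j + 1 => if (dig w j).isSome then some j else lastPos w j

lemma lastPos_eq_none (w : St m k) (n : ℕ) (h : ∀ j, j < n → dig w j = none) :
    lastPos w n = none := by
  induction n with
  | zero => rfl
  | succ n ih =>
    simp only [lastPos, h n (by omega), Option.isSome_none, Bool.false_eq_true, if_false]
    exact ih (fun j hj => h j (by omega))

lemma lastPos_eq_some (w : St m k) {n d : ℕ} (hd : d < n) (hs : (dig w d).isSome)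
    (h : ∀ j, d < j → j < n → dig w j = none) : lastPos w n = some d := by
  induction n with
  | zero => omega
  | succ n ih =>
    by_cases hdn : d = n
    · subst hdn; simp [lastPos, hs]
    · have : dig w n = none := h n (by omega) (by omega)
      simp only [lastPos, this, Option.isSome_none, Bool.false_eq_true, if_false]
      exact ih (by omega) (fun j hj hjn => h j hj (by omega))

/-! ### The branching program (structured form) -/

def leafPf (w : St m k) : IsLeafNode (m + 1) (nodeOf w m) :=
  ⟨by simpa using nodeOf_lb w m, nodeOf_ub w m⟩

def internalPf (w : St m k) {d : ℕ} (hd : d < m) : IsInternalNode (m + 1) (nodeOf w d) := by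
  constructor
  · have := nodeOf_lb w d
    have : 1 ≤ 2 ^ d := Nat.one_le_two_pow
    omega
  · have h1 := nodeOf_ub w d
    have h2 : 2 ^ (d + 1) ≤ 2 ^ m := Nat.pow_le_pow_right (by norm_num) (by omega)
    simpa using lt_of_lt_of_le h1 h2

def label' (w : St m k) : TEVar (m + 1) k ⊕ Fin k :=
  match w (lastIdx m) with
  | none => Sum.inl (.leaf (nodeOf w m) (leafPf w))
  | some b =>
    match lastPos w m with
    | none => Sum.inr b
    | some d =>
      if hd : d < m then
        match dig w d with
        | some a => Sum.inl (.internal (nodeOf w d) (internalPf w hd) a b)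
        | none => Sum.inr b
      else Sum.inr b

/-- Transition after the value `v` of the node at depth `d` has been obtained. -/
def exitT (w : St m k) (d : ℕ) (v : Fin k) : St m k :=
  if d = 0 then fun j => if j.val = m then some v else none
  else
    match dig w (d - 1) with
    | none => fun j => if j.val < d - 1 then w j else if j.val = d - 1 then some v else none
    | some _ => fun j => if j.val < d then w j else if j.val = m then some v else none

def next' (w : St m k) (v : Fin k) : St m k :=
  match w (lastIdx m) with
  | none => exitT w m v
  | some _ =>
    match lastPos w m with
    | none => w
    | some d => exitT w d v

def step' (x : TEVar (m + 1) k → Fin k) (w : St m k) : St m k :=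
  match label' w with
  | .inl v => next' w (x v)
  | .inr _ => w

/-! ### Step characterizations -/

lemma label'_leaf (w : St m k) (hm : w (lastIdx m) = none) :
    label' w = Sum.inl (.leaf (nodeOf w m) (leafPf w)) := by
  simp [label', hm]

lemma step'_leaf (x : TEVar (m + 1) k → Fin k) (w : St m k) (hm : w (lastIdx m) = none) :
    step' x w = exitT w m (x (.leaf (nodeOf w m) (leafPf w))) := by
  simp [step', label', next', hm]

lemma label'_internal (w : St m k) {d : ℕ} {a b : Fin k} (hm : w (lastIdx m) = some b)
    (hl : lastPos w m = some d) (hd : d < m) (ha : dig w d = some a) :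
    label' w = Sum.inl (.internal (nodeOf w d) (internalPf w hd) a b) := by
  simp [label', hm, hl, hd, ha]

lemma step'_internal (x : TEVar (m + 1) k → Fin k) (w : St m k) {d : ℕ} {a b : Fin k}
    (hm : w (lastIdx m) = some b) (hl : lastPos w m = some d) (hd : d < m)
    (ha : dig w d = some a) :
    step' x w = exitT w d (x (.internal (nodeOf w d) (internalPf w hd) a b)) := by
  simp [step', label', next', hm, hl, hd, ha]

lemma label'_out (w : St m k) {b : Fin k} (hm : w (lastIdx m) = some b)
    (hl : lastPos w m = none) : label' w = Sum.inr b := by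
  simp [label', hm, hl]

lemma step'_of_out (x : TEVar (m + 1) k → Fin k) (w : St m k) {b : Fin k}
    (hb : label' w = Sum.inr b) : step' x w = w := by
  simp [step', hb]

lemma exitT_congr {w w' : St m k} (d : ℕ) (v : Fin k)
    (hw : ∀ j, j < d → dig w j = dig w' j) : exitT w d v = exitT w' d v := by
  unfold exitT
  by_cases hd : d = 0
  · simp [hd]
  · rw [if_neg hd, if_neg hd, hw (d-1) (by omega)]
    have hww : ∀ j : Fin (m+1), j.val < d → w j = w' j := by
      intro j hj
      rw [← dig_fin w j, ← dig_fin w' j, hw j.val hj]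
    cases dig w' (d - 1) with
    | none =>
      funext j
      by_cases h1 : j.val < d - 1 <;> simp [h1]
      exact hww j (by omega)
    | some a =>
      funext j
      by_cases h1 : j.val < d <;> simp [h1]
      exact hww j h1

end ThriftyConstruction

namespace ThriftyConstruction

variable {m k : ℕ}

def OKs (I : TEInput (m+1) k) (w : St m k) : Prop :=
  ∀ (i : ℕ) (hi : IsInternalNode (m+1) i) (a b : Fin k),
    label' w = Sum.inl (TEVar.internal i hi a b) →
    a = I.val (2 * i) ∧ b = I.val (2 * i + 1)

lemma dig_s0 (j : ℕ) : dig (fun _ => none : St m k) j = none := by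
  unfold dig; split <;> rfl

lemma dig_mk (w : St m k) (j : ℕ) (hj : j < m + 1) : dig w j = w ⟨j, hj⟩ := by
  simp [dig, hj]

lemma trav (I : TEInput (m+1) k) :
    ∀ (r d : ℕ), d + r = m → ∀ w : St m k, (∀ j, d ≤ j → dig w j = none) →
    ∃ T, (step' I.evalVar)^[T + 1] w = exitT w d (I.val (nodeOf w d)) ∧
      ∀ t, t ≤ T → OKs I ((step' I.evalVar)^[t] w) := by
  intro r
  induction r with
  | zero =>
    intro d hd w hw
    obtain rfl : d = m := by omega
    have hm : w (lastIdx d) = none := by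
      have h0 := hw d le_rfl
      rw [dig_mk w d (Nat.lt_succ_self d)] at h0
      exact h0
    refine ⟨0, ?_, ?_⟩
    · rw [Function.iterate_one, step'_leaf I.evalVar w hm]
      have hev : I.evalVar (TEVar.leaf (nodeOf w d) (leafPf w)) = I.val (nodeOf w d) := by
        show I.leaf (nodeOf w d) = I.val (nodeOf w d)
        rw [val_leaf I _ (nodeOf_lb w d)]
      rw [hev]
    · intro t ht
      obtain rfl : t = 0 := by omega
      intro i hi a b hlab
      rw [Function.iterate_zero_apply, label'_leaf w hm] at hlab
      simp at hlab
  | succ r ih =>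
    intro d hdr w hw
    set x := I.evalVar with hx
    have hdm : d < m := by omega
    obtain ⟨T₁, h₁, hOK₁⟩ := ih (d+1) (by omega) w (fun j hj => hw j (by omega))
    have hdigd : dig w d = none := hw d le_rfl
    have hnode1 : nodeOf w (d+1) = 2 * nodeOf w d := by simp [nodeOf, hdigd]
    set i := nodeOf w d with hi_def
    set vL := I.val (2 * i) with hvL
    set w₁ : St m k :=
      (fun j => if j.val < d then w j else if j.val = d then some vL else none) with hw₁def
    have hexit1 : exitT w (d+1) (I.val (nodeOf w (d+1))) = w₁ := by
      rw [hnode1, ← hvL]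
      unfold exitT
      rw [if_neg (by omega)]
      simp only [Nat.add_sub_cancel, hdigd]
      rfl
    rw [hexit1] at h₁
    -- facts about w₁
    have hdw₁ : ∀ j, j < d → dig w₁ j = dig w j := by
      intro j hj
      have hjm : j < m + 1 := by omega
      rw [dig_mk w₁ j hjm, hw₁def]
      show (if j < d then w ⟨j, hjm⟩ else if j = d then some vL else none) = dig w j
      rw [if_pos hj, dig_mk w j hjm]
    have hdig₁d : dig w₁ d = some vL := by
      have hdm1 : d < m + 1 := by omega
      rw [dig_mk w₁ d hdm1, hw₁def]
      show (if d < d then w ⟨d, hdm1⟩ else if d = d then some vL else none) = some vL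
      rw [if_neg (by omega), if_pos rfl]
    have hgt₁ : ∀ j, d + 1 ≤ j → dig w₁ j = none := by
      intro j hj
      unfold dig; split
      · rename_i hjm
        rw [hw₁def]
        show (if j < d then w ⟨j, hjm⟩ else if j = d then some vL else none) = none
        rw [if_neg (by omega), if_neg (by omega)]
      · rfl
    have hnodes₁ : nodeOf w₁ d = i := nodeOf_congr d hdw₁
    have hnode₁1 : nodeOf w₁ (d+1) = 2 * i + 1 := by
      simp [nodeOf, hdig₁d, hnodes₁]
    obtain ⟨T₂, h₂, hOK₂⟩ := ih (d+1) (by omega) w₁ hgt₁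
    rw [hnode₁1] at h₂
    set vR := I.val (2 * i + 1) with hvR
    set w₂ : St m k :=
      (fun j => if j.val < d + 1 then w₁ j else if j.val = m then some vR else none) with hw₂def
    have hexit2 : exitT w₁ (d+1) vR = w₂ := by
      unfold exitT
      rw [if_neg (by omega)]
      simp only [Nat.add_sub_cancel]
      rw [hdig₁d]
    rw [hexit2] at h₂
    -- facts about w₂
    have hm₂ : w₂ (lastIdx m) = some vR := by
      rw [hw₂def]
      show (if m < d + 1 then w₁ (lastIdx m) else if m = m then some vR else none) = some vR
      rw [if_neg (by omega), if_pos rfl]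
    have hdig₂d : dig w₂ d = some vL := by
      have hdm1 : d < m + 1 := by omega
      rw [dig_mk w₂ d hdm1, hw₂def]
      show (if d < d + 1 then w₁ ⟨d, hdm1⟩ else if d = m then some vR else none) = some vL
      rw [if_pos (by omega), ← dig_mk w₁ d hdm1, hdig₁d]
    have hmid₂ : ∀ j, d < j → j < m → dig w₂ j = none := by
      intro j h1 h2
      have hjm : j < m + 1 := by omega
      rw [dig_mk w₂ j hjm, hw₂def]
      show (if j < d + 1 then w₁ ⟨j, hjm⟩ else if j = m then some vR else none) = none
      rw [if_neg (by omega), if_neg (by omega)]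
    have hlast₂ : lastPos w₂ m = some d :=
      lastPos_eq_some w₂ hdm (by rw [hdig₂d]; rfl) hmid₂
    have hdw₂ : ∀ j, j < d → dig w₂ j = dig w j := by
      intro j hj
      have hjm : j < m + 1 := by omega
      rw [dig_mk w₂ j hjm, hw₂def]
      show (if j < d + 1 then w₁ ⟨j, hjm⟩ else if j = m then some vR else none) = dig w j
      rw [if_pos (by omega), ← dig_mk w₁ j hjm, hdw₁ j hj]
    have hnode₂ : nodeOf w₂ d = i := by
      rw [nodeOf_congr d hdw₂]
    have hlab₂ := label'_internal w₂ hm₂ hlast₂ hdm hdig₂d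
    have hOKw₂ : OKs I w₂ := by
      intro i' hi' a' b' h
      rw [hlab₂] at h
      have h' := Sum.inl.inj h
      injection h' with e1 e3 e4
      constructor
      · rw [← e3, ← e1, hnode₂]
      · rw [← e4, ← e1, hnode₂]
    -- bounds for the node i
    have hibound1 : 1 ≤ i := by
      have h1 := nodeOf_lb w d
      have h2 : 1 ≤ 2 ^ d := Nat.one_le_two_pow
      omega
    have hibound2 : i < 2 ^ m := by
      have h1 := nodeOf_ub w d
      have h2 : 2 ^ (d + 1) ≤ 2 ^ m := Nat.pow_le_pow_right (by norm_num) (by omega)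
      omega
    have hstep₂ : step' x w₂ = exitT w d (I.val i) := by
      rw [step'_internal x w₂ hm₂ hlast₂ hdm hdig₂d]
      have hxval : x (TEVar.internal (nodeOf w₂ d) (internalPf w₂ hdm) vL vR)
          = I.val i := by
        show I.f (nodeOf w₂ d) vL vR = I.val i
        rw [hnode₂, hvL, hvR, ← val_internal I i hibound1 hibound2]
      rw [hxval]
      exact exitT_congr d _ (fun j hj => hdw₂ j hj)
    refine ⟨T₁ + T₂ + 2, ?_, ?_⟩
    · rw [show T₁ + T₂ + 2 + 1 = 1 + ((T₂ + 1) + (T₁ + 1)) by omega,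
        Function.iterate_add_apply, Function.iterate_add_apply, h₁, h₂,
        Function.iterate_one, hstep₂]
    · intro t ht
      by_cases ht1 : t ≤ T₁
      · exact hOK₁ t ht1
      · rw [show t = (t - (T₁ + 1)) + (T₁ + 1) by omega, Function.iterate_add_apply, h₁]
        by_cases ht2 : t - (T₁ + 1) ≤ T₂
        · exact hOK₂ _ ht2
        · rw [show t - (T₁ + 1) = T₂ + 1 by omega, h₂]
          exact hOKw₂

lemma label'_final (v : Fin k) :
    label' (exitT (fun _ => none : St m k) 0 v) = Sum.inr v := by
  have hfin : exitT (fun _ => none : St m k) 0 v =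
      (fun j => if j.val = m then some v else none) := by
    unfold exitT; rw [if_pos rfl]
  rw [hfin]
  apply label'_out
  · show (if m = m then some v else none) = some v
    rw [if_pos rfl]
  · apply lastPos_eq_none
    intro j hj
    have hjm : j < m + 1 := by omega
    rw [dig_mk _ j hjm]
    show (if j = m then some v else none) = none
    rw [if_neg (by omega)]

end ThriftyConstruction

namespace ThriftyConstruction

noncomputable def eqv (m k : ℕ) : St m k ≃ Fin ((k + 1) ^ (m + 1)) :=
  Fintype.equivFinOfCardEq (by simp)

noncomputable def theBP (m k : ℕ) : DetBP (TEVar (m + 1) k) k (Fin k) where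
  size := (k + 1) ^ (m + 1)
  start := eqv m k (fun _ => none)
  label s := label' ((eqv m k).symm s)
  next s v := eqv m k (next' ((eqv m k).symm s) v)

variable {m k : ℕ}

lemma theBP_label (w : St m k) : (theBP m k).label (eqv m k w) = label' w := by
  simp [theBP]

lemma theBP_step (x : TEVar (m + 1) k → Fin k) (w : St m k) :
    (theBP m k).step x (eqv m k w) = eqv m k (step' x w) := by
  unfold DetBP.step step'
  rcases hl : label' w with v | r
  · simp [theBP, hl]
  · simp [theBP, hl]

lemma theBP_run (x : TEVar (m + 1) k → Fin k) (t : ℕ) :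
    (theBP m k).run x t = eqv m k ((step' x)^[t] (fun _ => none)) := by
  induction t with
  | zero => rfl
  | succ t ih =>
    have e1 : (theBP m k).run x (t + 1) = (theBP m k).step x ((theBP m k).run x t) := by
      rw [DetBP.run, DetBP.run, Function.iterate_succ_apply']
    rw [e1, ih, theBP_step, Function.iterate_succ_apply']

lemma theBP_solves : (theBP m k).SolvesFT := by
  intro I
  obtain ⟨T, hT, _⟩ := trav I m 0 (by omega) (fun _ => none) (fun j _ => dig_s0 j)
  refine ⟨T + 1, ?_⟩
  rw [theBP_run, hT, theBP_label]
  have h1 : nodeOf (fun _ => none : St m k) 0 = 1 := rfl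
  rw [h1, label'_final]

lemma theBP_thrifty : (theBP m k).Thrifty := by
  intro I t i hi a b hlab
  obtain ⟨T, hT, hOK⟩ := trav I m 0 (by omega) (fun _ => none) (fun j _ => dig_s0 j)
  rw [theBP_run, theBP_label] at hlab
  by_cases htT : t ≤ T
  · exact hOK t htT i hi a b hlab
  · exfalso
    have hfix := step'_of_out I.evalVar _
      (label'_final (m := m) (I.val (nodeOf (fun _ => none : St m k) 0)))
    have hit : (step' I.evalVar)^[t] (fun _ => none : St m k)
        = exitT (fun _ => none) 0 (I.val (nodeOf (fun _ => none : St m k) 0)) := by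
      rw [show t = (t - (T + 1)) + (T + 1) by omega, Function.iterate_add_apply, hT]
      exact Function.iterate_fixed hfix _
    rw [hit, label'_final] at hlab
    cases hlab

end ThriftyConstruction



/-- For all `h ≥ 1` and `k ≥ 1`, there exists a deterministic thrifty `k`-way
branching program with exactly `(k+1)^h` states that solves `FT^h_2(k)`. -/
theorem stmt_0 (h k : ℕ) (hh : 1 ≤ h) (hk : 1 ≤ k) :
    ∃ B : DetBP (TEVar h k) k (Fin k),
      B.size = (k + 1) ^ h ∧ B.SolvesFT ∧ B.Thrifty := by
  obtain ⟨m, rfl⟩ : ∃ m, h = m + 1 := ⟨h - 1, by omega⟩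
  exact ⟨ThriftyConstruction.theBP m k, rfl,
    ThriftyConstruction.theBP_solves, ThriftyConstruction.theBP_thrifty⟩
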